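/- In a cubic partial cube, two isometric 6-cycles cannot share three consecutive edges. -/
import Mathlib


open SimpleGraph

/-- A partial cube: a connected graph admitting an isometric embedding into a hypercube,
i.e. an injective map to `{0,1}^n` such that Hamming distance equals graph distance. -/
def IsPartialCube {V : Type} (G : SimpleGraph V) : Prop :=
  G.Connected ∧ ∃ (n : ℕ) (f : V → (Fin n → Bool)),
    Function.Injective f ∧ ∀ u v : V, hammingDist (f u) (f v) = G.dist u v

/-- The set of coordinates where two vertices' images differ. -/
private def Dset {V : Type} {n : ℕ} (f : V → (Fin n → Bool)) (u v : V) : Finset (Fin n) :=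
  Finset.univ.filter (fun i => f u i ≠ f v i)

private lemma hammingDist_eq_card {V : Type} {n : ℕ} (f : V → (Fin n → Bool)) (u v : V) :
    hammingDist (f u) (f v) = (Dset f u v).card := rfl

private lemma Dset_triangle {V : Type} {n : ℕ} (f : V → (Fin n → Bool)) (u v w : V) :
    Dset f u w = symmDiff (Dset f u v) (Dset f v w) := by
  ext i
  simp only [Dset, Finset.mem_symmDiff, Finset.mem_filter, Finset.mem_univ, true_and, not_not]
  cases h1 : f u i <;> cases h2 : f v i <;> cases h3 : f w i <;> simp

private lemma sd_cancel {α : Type*} [DecidableEq α] (A B C : Finset α) :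
    symmDiff (symmDiff (symmDiff A B) C) A = symmDiff B C := by
  rw [symmDiff_comm (symmDiff (symmDiff A B) C) A, symmDiff_assoc A B C,
    ← symmDiff_assoc A A, symmDiff_self, bot_symmDiff]

private lemma card3_distinct {α : Type*} [DecidableEq α] {a b c : α}
    (h : (symmDiff (symmDiff ({a} : Finset α) {b}) {c}).card = 3) :
    a ≠ b ∧ a ≠ c ∧ b ≠ c := by
  refine ⟨?_, ?_, ?_⟩ <;> rintro rfl
  · rw [symmDiff_self, bot_symmDiff] at h
    simp at h
  · rw [symmDiff_comm ({a} : Finset α) {b}, symmDiff_assoc, symmDiff_self, symmDiff_bot] at h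
    simp at h
  · rw [symmDiff_assoc, symmDiff_self, symmDiff_bot] at h
    simp at h

private lemma card4_ne {α : Type*} [DecidableEq α] {a b c d : α}
    (hab : a ≠ b) (hac : a ≠ c) (hbc : b ≠ c) (hdb : d ≠ b) (hdc : d ≠ c) (hda : d ≠ a)
    (h : (symmDiff (symmDiff (symmDiff ({a} : Finset α) {b}) {c}) {d}).card = 2) :
    False := by
  have d1 : Disjoint ({a} : Finset α) {b} := Finset.disjoint_singleton.2 hab
  rw [d1.symmDiff_eq_sup] at h
  have d2 : Disjoint (({a} : Finset α) ⊔ {b}) {c} :=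
    Finset.disjoint_singleton_right.2 (by simp [Ne.symm hac, Ne.symm hbc, Finset.mem_union])
  rw [d2.symmDiff_eq_sup] at h
  have d3 : Disjoint ((({a} : Finset α) ⊔ {b}) ⊔ {c}) {d} :=
    Finset.disjoint_singleton_right.2 (by simp [hda, hdb, hdc, Finset.mem_union])
  rw [d3.symmDiff_eq_sup] at h
  simp only [Finset.sup_eq_union] at h
  rw [Finset.card_union_of_disjoint (by simpa only [Finset.sup_eq_union] using d3),
    Finset.card_union_of_disjoint (by simpa only [Finset.sup_eq_union] using d2),
    Finset.card_union_of_disjoint d1] at h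
  simp at h

/-- In a cubic partial cube, two isometric 6-cycles cannot share three consecutive
edges: there are no isometric 6-cycles `(v0 v1 v2 v3 v4 v5)` and
`(v0 v1 v2 v3 u4 u5)` sharing the path `v0 v1 v2 v3`.
(Isometricity is expressed by the distance conditions.) -/
theorem no_sixCycles_three_consecutive_edges {V : Type} (G : SimpleGraph V)
    (hG : IsPartialCube G) (hcubic : ∀ v : V, (G.neighborSet v).ncard = 3)
    (v0 v1 v2 v3 v4 v5 u4 u5 : V)
    (hdist : List.Pairwise (· ≠ ·) [v0, v1, v2, v3, v4, v5, u4, u5])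
    (a01 : G.Adj v0 v1) (a12 : G.Adj v1 v2) (a23 : G.Adj v2 v3)
    (a34 : G.Adj v3 v4) (a45 : G.Adj v4 v5) (a50 : G.Adj v5 v0)
    (b34 : G.Adj v3 u4) (b45 : G.Adj u4 u5) (b50 : G.Adj u5 v0)
    (d02 : G.dist v0 v2 = 2) (d13 : G.dist v1 v3 = 2) (d24 : G.dist v2 v4 = 2)
    (d35 : G.dist v3 v5 = 2) (d40 : G.dist v4 v0 = 2) (d51 : G.dist v5 v1 = 2)
    (d03 : G.dist v0 v3 = 3) (d14 : G.dist v1 v4 = 3) (d25 : G.dist v2 v5 = 3)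
    (e24 : G.dist v2 u4 = 2) (e35 : G.dist v3 u5 = 2) (e40 : G.dist u4 v0 = 2)
    (e51 : G.dist u5 v1 = 2) (e14 : G.dist v1 u4 = 3) (e25 : G.dist v2 u5 = 3) :
    False := by
  obtain ⟨-, n, f, hinj, hdistf⟩ := hG
  -- cardinalities of difference sets
  have hcard : ∀ u v : V, (Dset f u v).card = G.dist u v := fun u v => by
    rw [← hammingDist_eq_card, hdistf]
  -- each edge gives a singleton difference set
  have hedge : ∀ u v : V, G.Adj u v → ∃ a, Dset f u v = {a} := fun u v huv => by
    have h1 : (Dset f u v).card = 1 := by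
      rw [hcard, SimpleGraph.dist_eq_one_iff_adj.2 huv]
    exact Finset.card_eq_one.1 h1
  obtain ⟨a, ha⟩ := hedge _ _ a01
  obtain ⟨b, hb⟩ := hedge _ _ a12
  obtain ⟨c, hc⟩ := hedge _ _ a23
  obtain ⟨d, hd⟩ := hedge _ _ a34
  obtain ⟨d', hd'⟩ := hedge _ _ b34
  -- difference sets along the path
  have D03 : Dset f v0 v3 = symmDiff (symmDiff ({a} : Finset (Fin n)) {b}) {c} := by
    rw [Dset_triangle f v0 v2 v3, Dset_triangle f v0 v1 v2, ha, hb, hc]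
  have D14 : Dset f v1 v4 = symmDiff (symmDiff ({b} : Finset (Fin n)) {c}) {d} := by
    rw [Dset_triangle f v1 v3 v4, Dset_triangle f v1 v2 v3, hb, hc, hd]
  have D14' : Dset f v1 u4 = symmDiff (symmDiff ({b} : Finset (Fin n)) {c}) {d'} := by
    rw [Dset_triangle f v1 v3 u4, Dset_triangle f v1 v2 v3, hb, hc, hd']
  have D04 : Dset f v0 v4 = symmDiff (symmDiff (symmDiff ({a} : Finset (Fin n)) {b}) {c}) {d} := by
    rw [Dset_triangle f v0 v3 v4, D03, hd]
  have D04' : Dset f v0 u4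
      = symmDiff (symmDiff (symmDiff ({a} : Finset (Fin n)) {b}) {c}) {d'} := by
    rw [Dset_triangle f v0 v3 u4, D03, hd']
  -- distinctness from distances
  obtain ⟨hab, hac, hbc⟩ := card3_distinct (by rw [← D03, hcard, d03])
  obtain ⟨hbc', hbd, hcd⟩ := card3_distinct (a := b) (by rw [← D14, hcard, d14])
  obtain ⟨-, hbd', hcd'⟩ := card3_distinct (a := b) (by rw [← D14', hcard, e14])
  -- conclude d = a and d' = a
  have hda : d = a := by
    by_contra hda
    exact card4_ne hab hac hbc (Ne.symm hbd) (Ne.symm hcd) hda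
      (by rw [← D04, hcard, ← SimpleGraph.dist_comm, d40])
  have hd'a : d' = a := by
    by_contra hd'a
    exact card4_ne hab hac hbc (Ne.symm hbd') (Ne.symm hcd') hd'a
      (by rw [← D04', hcard, ← SimpleGraph.dist_comm, e40])
  -- hence f v4 = f u4
  subst hda hd'a
  have hDeq : Dset f v0 v4 = Dset f v0 u4 := by rw [D04, D04']
  have hfeq : f v4 = f u4 := by
    funext i
    have hiff : (f v0 i ≠ f v4 i) ↔ (f v0 i ≠ f u4 i) := by
      have h1 := Finset.ext_iff.1 hDeq i
      simpa [Dset] using h1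
    cases h0 : f v0 i <;> cases h4 : f v4 i <;> cases h4' : f u4 i <;>
      simp_all
  have heq : v4 = u4 := hinj hfeq
  simp only [List.pairwise_cons, List.mem_cons, List.not_mem_nil] at hdist
  obtain ⟨-, -, -, -, h4, -⟩ := hdist
  exact h4 u4 (by tauto) heq
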